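/- Let A be a graded-commutative DGA over ℚ, n ≥ 2, a ∈ A₁ with da = 0, and ρ_k ∈ A₁ (1 ≤ k ≤ n) with dρ_k = ρ_{k−1}·a (convention ρ₀ := 0, so dρ₁ = 0). Then the element L_n := Σ_{j=0}^{n−1} (−1)^j [ρ_{n−j}|a|⋯|a] (with j copies of the letter a) of the bar complex B(A) is homogeneous of degree 0 and is a cocycle: (d_I + d_E)(L_n) = 0. -/

import Mathlib

noncomputable section

open scoped TensorProduct DirectSum

/-- A graded-commutative differential graded algebra over `ℚ`, together with the
sign operator `J` (`Ja = (−1)^{deg a} a` on homogeneous elements). -/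
structure GCDGA (A : Type*) [Ring A] [Algebra ℚ A] where
  deg : ℤ → Submodule ℚ A
  decomp : DirectSum.Decomposition deg
  one_mem : (1 : A) ∈ deg 0
  mul_mem : ∀ {i j : ℤ} {x y : A}, x ∈ deg i → y ∈ deg j → x * y ∈ deg (i + j)
  d : A →ₗ[ℚ] A
  d_sq : ∀ x : A, d (d x) = 0
  d_deg : ∀ {i : ℤ} {x : A}, x ∈ deg i → d x ∈ deg (i + 1)
  leibniz : ∀ {i : ℤ} (x y : A), x ∈ deg i →
    d (x * y) = d x * y + ((-1 : ℚ) ^ i) • (x * d y)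
  gcomm : ∀ {i j : ℤ} (x y : A), x ∈ deg i → y ∈ deg j →
    x * y = ((-1 : ℚ) ^ (i * j)) • (y * x)
  J : A →ₗ[ℚ] A
  J_apply : ∀ {i : ℤ} {x : A}, x ∈ deg i → J x = ((-1 : ℚ) ^ i) • x

variable {A : Type*} [Ring A] [Algebra ℚ A]

/-- The `s`-th piece `A^{⊗s}` of the bar construction. -/
abbrev BarPiece (A : Type*) [Ring A] [Algebra ℚ A] (s : ℕ) := ⨂[ℚ] _ : Fin s, A

/-- The bar complex `B(A) = ⊕_{s ≥ 0} A^{⊗s}` as a graded `ℚ`-vector space. -/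
abbrev BarComplex (A : Type*) [Ring A] [Algebra ℚ A] := ⨁ s : ℕ, BarPiece A s

/-- `a ⊗ [a₁|⋯|a_m] ↦ [a|a₁|⋯|a_m]`. -/
def prependL (A : Type*) [Ring A] [Algebra ℚ A] (m : ℕ) :
    A →ₗ[ℚ] BarPiece A m →ₗ[ℚ] BarPiece A (m + 1) :=
  (PiTensorProduct.lift (R := ℚ)).toLinearMap ∘ₗ
    (PiTensorProduct.tprod ℚ (s := fun _ : Fin (m + 1) => A)).curryLeft

/-- Auxiliary: `[a₁|⋯|a_{m+1}] ↦ a₁ ⊗ [a₂|⋯|a_{m+1}]`, curried. -/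
def splitFun (A : Type*) [Ring A] [Algebra ℚ A] (m : ℕ) :
    A →ₗ[ℚ] MultilinearMap ℚ (fun _ : Fin m => A) (A ⊗[ℚ] BarPiece A m) where
  toFun a := (TensorProduct.mk ℚ A (BarPiece A m) a).compMultilinearMap
    (PiTensorProduct.tprod ℚ)
  map_add' a b := by
    ext v
    simp [TensorProduct.add_tmul]
  map_smul' c a := by
    ext v
    simp [TensorProduct.smul_tmul']

/-- `[a₁|⋯|a_{m+1}] ↦ a₁ ⊗ [a₂|⋯|a_{m+1}]`. -/
def splitL (A : Type*) [Ring A] [Algebra ℚ A] (m : ℕ) :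
    BarPiece A (m + 1) →ₗ[ℚ] A ⊗[ℚ] BarPiece A m :=
  PiTensorProduct.lift (LinearMap.uncurryLeft (splitFun A m))

/-- Multiply the first two tensor slots. -/
def mergeHead (A : Type*) [Ring A] [Algebra ℚ A] (s : ℕ) :
    BarPiece A (s + 2) →ₗ[ℚ] BarPiece A (s + 1) :=
  (TensorProduct.lift (prependL A s)) ∘ₗ
    (TensorProduct.map (LinearMap.mul' ℚ A) LinearMap.id) ∘ₗ
    (TensorProduct.assoc ℚ A A (BarPiece A s)).symm.toLinearMap ∘ₗ
    (TensorProduct.map LinearMap.id (splitL A s)) ∘ₗ splitL A (s + 1)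

/-- Multiply the two adjacent tensor slots at (0-indexed) positions `i, i+1`. -/
def contractL (A : Type*) [Ring A] [Algebra ℚ A] :
    (s i : ℕ) → (BarPiece A (s + 2) →ₗ[ℚ] BarPiece A (s + 1))
  | s, 0 => mergeHead A s
  | 0, _ + 1 => mergeHead A 0
  | s + 1, i + 1 =>
      (TensorProduct.lift (prependL A (s + 1))) ∘ₗ
        (TensorProduct.map LinearMap.id (contractL A s i)) ∘ₗ splitL A (s + 2)

/-- The internal bar differential on the `s`-th piece. -/
def dIcomp (G : GCDGA A) (s : ℕ) : BarPiece A s →ₗ[ℚ] BarPiece A s :=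
  ∑ i : Fin s, ((-1 : ℚ) ^ ((i : ℕ) + 1)) •
    PiTensorProduct.map (fun j : Fin s =>
      if j < i then G.J else if j = i then G.d else LinearMap.id)

/-- The external bar differential on the `(s+2)`-nd piece. -/
def dEcomp (G : GCDGA A) (s : ℕ) : BarPiece A (s + 2) →ₗ[ℚ] BarPiece A (s + 1) :=
  ∑ i : Fin (s + 1), ((-1 : ℚ) ^ (i : ℕ)) •
    (contractL A s i ∘ₗ
      PiTensorProduct.map (fun j : Fin (s + 2) =>
        if (j : ℕ) ≤ (i : ℕ) then G.J else LinearMap.id))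

/-- The external differential out of the `s`-th piece (zero for `s = 0, 1`). -/
def dEpiece (G : GCDGA A) : (s : ℕ) → (BarPiece A s →ₗ[ℚ] BarComplex A)
  | 0 => 0
  | 1 => 0
  | s + 2 => (DirectSum.lof ℚ ℕ (fun k => BarPiece A k) (s + 1)) ∘ₗ dEcomp G s

/-- The internal differential `d_I` of the bar complex. -/
def barDI (G : GCDGA A) : BarComplex A →ₗ[ℚ] BarComplex A :=
  DirectSum.toModule ℚ ℕ _ (fun s =>
    (DirectSum.lof ℚ ℕ (fun k => BarPiece A k) s) ∘ₗ dIcomp G s)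

/-- The external differential `d_E` of the bar complex. -/
def barDE (G : GCDGA A) : BarComplex A →ₗ[ℚ] BarComplex A :=
  DirectSum.toModule ℚ ℕ _ (dEpiece G)

/-- The degree-`m` part of the bar complex: spanned by words `[a₁|⋯|a_s]` of
homogeneous letters with `(∑ deg aᵢ) − s = m`. -/
def barDeg (G : GCDGA A) (m : ℤ) : Submodule ℚ (BarComplex A) :=
  Submodule.span ℚ {x | ∃ (s : ℕ) (v : Fin s → A) (dv : Fin s → ℤ),
    (∀ k, v k ∈ G.deg (dv k)) ∧ (∑ k, dv k) - (s : ℤ) = m ∧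
    x = DirectSum.lof ℚ ℕ (fun k => BarPiece A k) s (PiTensorProduct.tprod ℚ v)}

lemma splitL_tprod (m : ℕ) (x : A) (u : Fin m → A) :
    splitL A m (PiTensorProduct.tprod ℚ (Fin.cons x u)) = x ⊗ₜ[ℚ] PiTensorProduct.tprod ℚ u := by
  simp [splitL, splitFun, LinearMap.uncurryLeft_apply, Fin.tail_cons]

lemma prependL_tprod (m : ℕ) (x : A) (u : Fin m → A) :
    prependL A m x (PiTensorProduct.tprod ℚ u) = PiTensorProduct.tprod ℚ (Fin.cons x u) := by
  simp [prependL]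

lemma mergeHead_tprod (s : ℕ) (x y : A) (u : Fin s → A) :
    mergeHead A s (PiTensorProduct.tprod ℚ (Fin.cons x (Fin.cons y u))) =
      PiTensorProduct.tprod ℚ (Fin.cons (x * y) u) := by
  simp [mergeHead, splitL_tprod, prependL_tprod]

lemma tprod_zero_slot {s : ℕ} (v : Fin s → A) (i : Fin s) (h : v i = 0) :
    (PiTensorProduct.tprod ℚ v : BarPiece A s) = 0 :=
  MultilinearMap.map_coord_zero _ i h

lemma contractL_allsame (aa : A) (haa : aa * aa = 0) :
    ∀ (s i : ℕ), contractL A s i (PiTensorProduct.tprod ℚ (fun _ : Fin (s + 2) => aa)) = 0 := by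
  intro s i
  induction s generalizing i with
  | zero =>
    cases i <;>
    · show mergeHead A 0 _ = 0
      rw [show (fun _ : Fin 2 => aa) = Fin.cons aa (Fin.cons aa (fun _ : Fin 0 => aa)) by
        ext k; exact (Fin.cases rfl (fun k => Fin.cases rfl (fun k => k.elim0) k) k)]
      rw [mergeHead_tprod, haa]
      exact tprod_zero_slot _ 0 rfl
  | succ s ih =>
    cases i with
    | zero =>
      show mergeHead A (s+1) _ = 0
      rw [show (fun _ : Fin (s+3) => aa) = Fin.cons aa (Fin.cons aa (fun _ : Fin (s+1) => aa)) by
        ext k; refine Fin.cases rfl (fun k => Fin.cases rfl (fun k => rfl) k) k]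
      rw [mergeHead_tprod, haa]
      exact tprod_zero_slot _ 0 rfl
    | succ i =>
      rw [contractL]
      rw [show (fun _ : Fin (s+3) => aa) = Fin.cons aa (fun _ : Fin (s+2) => aa) by
        ext k; refine Fin.cases rfl (fun k => rfl) k]
      rw [LinearMap.comp_apply, LinearMap.comp_apply, splitL_tprod, TensorProduct.map_tmul, ih i, TensorProduct.tmul_zero, map_zero]

lemma contractL_word (aa : A) (haa : aa * aa = 0) (x : A) :
    ∀ (s i : ℕ), i ≤ s → contractL A (s+1) (i+1)
      (PiTensorProduct.tprod ℚ (Fin.cons x (fun _ : Fin (s + 2) => aa))) = 0 := by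
  intro s i _
  rw [contractL]
  rw [LinearMap.comp_apply, LinearMap.comp_apply, splitL_tprod, TensorProduct.map_tmul, contractL_allsame aa haa s i,
    TensorProduct.tmul_zero, map_zero]

lemma const_succ (aa : A) (t : ℕ) :
    (fun _ : Fin (t+1) => aa) = Fin.cons aa (fun _ : Fin t => aa) := by
  funext k; exact Fin.cases rfl (fun m => rfl) k

lemma dI_word (G : GCDGA A) (aa : A) (hda : G.d aa = 0) (j : ℕ) (x : A) :
    dIcomp G (j+1) (PiTensorProduct.tprod ℚ (Fin.cons x (fun _ : Fin j => aa))) =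
      - PiTensorProduct.tprod ℚ (Fin.cons (G.d x) (fun _ : Fin j => aa)) := by
  rw [dIcomp, LinearMap.sum_apply, Fin.sum_univ_succ]
  have h1 : ∀ i : Fin j, (((-1 : ℚ) ^ (((Fin.succ i : Fin (j+1)) : ℕ) + 1)) •
      PiTensorProduct.map (fun m : Fin (j+1) =>
        if m < Fin.succ i then G.J else if m = Fin.succ i then G.d else LinearMap.id))
      (PiTensorProduct.tprod ℚ (Fin.cons x (fun _ : Fin j => aa))) = 0 := by
    intro i
    rw [LinearMap.smul_apply, PiTensorProduct.map_tprod]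
    rw [tprod_zero_slot _ (Fin.succ i) (by simp [hda]), smul_zero]
  rw [Finset.sum_eq_zero fun i _ => h1 i, add_zero]
  rw [LinearMap.smul_apply, PiTensorProduct.map_tprod]
  have h0 : (fun m : Fin (j+1) =>
      (if m < (0 : Fin (j+1)) then G.J else if m = 0 then G.d else LinearMap.id)
        ((Fin.cons x (fun _ : Fin j => aa) : Fin (j+1) → A) m)) = Fin.cons (G.d x) (fun _ : Fin j => aa) := by
    funext m
    refine Fin.cases ?_ (fun k => ?_) m
    · simp
    · simp [Fin.succ_ne_zero]
  rw [h0]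
  simp

lemma dE_key (G : GCDGA A) (aa : A) (hJa : G.J aa = -aa) (t : ℕ) (x : A) (hJx : G.J x = -x)
    (i : Fin (t+1)) :
    (PiTensorProduct.map (fun k : Fin (t+2) => if (k:ℕ) ≤ (i:ℕ) then G.J else LinearMap.id))
      (PiTensorProduct.tprod ℚ (Fin.cons x (fun _ : Fin (t+1) => aa))) =
    (∏ k : Fin (t+2), if (k:ℕ) ≤ (i:ℕ) then (-1:ℚ) else 1) •
      PiTensorProduct.tprod ℚ (Fin.cons x (fun _ : Fin (t+1) => aa)) := by
  rw [PiTensorProduct.map_tprod]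
  rw [show (fun k : Fin (t+2) => (if (k:ℕ) ≤ (i:ℕ) then G.J else LinearMap.id)
        ((Fin.cons x (fun _ : Fin (t+1) => aa) : Fin (t+2) → A) k))
      = fun k : Fin (t+2) => (if (k:ℕ) ≤ (i:ℕ) then (-1:ℚ) else 1) •
        (Fin.cons x (fun _ : Fin (t+1) => aa) : Fin (t+2) → A) k from ?_]
  · exact MultilinearMap.map_smul_univ _ _ _
  · funext k
    refine Fin.cases ?_ (fun m => ?_) k
    · simp [hJx]
    · by_cases h : (m:ℕ)+1 ≤ (i : ℕ) <;> simp [Fin.val_succ, h, hJa]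

lemma dE_word (G : GCDGA A) (aa : A) (haa : aa * aa = 0) (hJa : G.J aa = -aa)
    (t : ℕ) (x : A) (hJx : G.J x = -x) :
    dEcomp G t (PiTensorProduct.tprod ℚ (Fin.cons x (fun _ : Fin (t+1) => aa))) =
      - PiTensorProduct.tprod ℚ (Fin.cons (x * aa) (fun _ : Fin t => aa)) := by
  rw [dEcomp, LinearMap.sum_apply, Fin.sum_univ_succ]
  have hsucc : ∀ k : Fin t, (((-1 : ℚ) ^ ((Fin.succ k : Fin (t+1)) : ℕ)) •
      (contractL A t ((Fin.succ k : Fin (t+1)) : ℕ) ∘ₗ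
        PiTensorProduct.map (fun j : Fin (t+2) =>
          if (j : ℕ) ≤ ((Fin.succ k : Fin (t+1)) : ℕ) then G.J else LinearMap.id)))
      (PiTensorProduct.tprod ℚ (Fin.cons x (fun _ : Fin (t+1) => aa))) = 0 := by
    intro k
    rw [LinearMap.smul_apply, LinearMap.comp_apply, dE_key G aa hJa t x hJx, map_smul]
    obtain ⟨s, rfl⟩ : ∃ s, t = s + 1 := ⟨t - 1, by have := k.is_lt; omega⟩
    rw [Fin.val_succ, contractL_word aa haa x s k k.is_le, smul_zero, smul_zero]
  rw [Finset.sum_eq_zero fun k _ => hsucc k, add_zero]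
  rw [LinearMap.smul_apply, LinearMap.comp_apply, dE_key G aa hJa t x hJx, map_smul]
  have hprod : (∏ k : Fin (t+2), if (k:ℕ) ≤ (((0 : Fin (t+1))):ℕ) then (-1:ℚ) else 1) = -1 := by
    simp [Fin.prod_univ_succ]
  rw [hprod]
  have hc : contractL A t ((0 : Fin (t+1)) : ℕ)
      (PiTensorProduct.tprod ℚ (Fin.cons x (fun _ : Fin (t+1) => aa))) =
      PiTensorProduct.tprod ℚ (Fin.cons (x * aa) (fun _ : Fin t => aa)) := by
    rw [Fin.val_zero, contractL, const_succ aa t, mergeHead_tprod]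
  rw [hc]
  simp

def Eterm (n : ℕ) (a : A) (ρ : ℕ → A) (j : ℕ) : BarComplex A :=
  DirectSum.lof ℚ ℕ (fun k => BarPiece A k) (j + 1)
    (PiTensorProduct.tprod ℚ (Fin.cons (ρ (n - j)) (fun _ : Fin j => a)))

def Gterm (n : ℕ) (a : A) (ρ : ℕ → A) (j : ℕ) : BarComplex A :=
  DirectSum.lof ℚ ℕ (fun k => BarPiece A k) (j + 1)
    (PiTensorProduct.tprod ℚ (Fin.cons (ρ (n - j - 1) * a) (fun _ : Fin j => a)))

lemma DI_E (G : GCDGA A) (n : ℕ) (a : A) (hda : G.d a = 0) (ρ : ℕ → A)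
    (hdρ : ∀ k, 1 ≤ k → k ≤ n → G.d (ρ k) = ρ (k - 1) * a) (j : ℕ) (hj : j < n) :
    barDI G (Eterm n a ρ j) = -(Gterm n a ρ j) := by
  rw [Eterm, barDI, DirectSum.toModule_lof, LinearMap.comp_apply,
    dI_word G a hda j (ρ (n - j)), hdρ (n - j) (by omega) (by omega), map_neg]
  rfl

lemma DE_E0 (G : GCDGA A) (n : ℕ) (a : A) (ρ : ℕ → A) :
    barDE G (Eterm n a ρ 0) = 0 := by
  rw [Eterm, barDE, DirectSum.toModule_lof]
  rfl

lemma DE_Es (G : GCDGA A) (n : ℕ) (a : A) (haa : a * a = 0) (hJa : G.J a = -a)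
    (ρ : ℕ → A) (j : ℕ) (hj : j + 1 < n) (hJx : G.J (ρ (n - (j+1))) = -(ρ (n - (j+1)))) :
    barDE G (Eterm n a ρ (j+1)) = -(Gterm n a ρ j) := by
  rw [Eterm, barDE, DirectSum.toModule_lof, dEpiece, LinearMap.comp_apply,
    dE_word G a haa hJa j (ρ (n - (j+1))) hJx, map_neg]
  rw [show n - (j+1) = n - j - 1 from by omega]
  rfl

theorem polylog_aux (G : GCDGA A) (n : ℕ) (hn : 2 ≤ n)
    (a : A) (ha : a ∈ G.deg 1) (hda : G.d a = 0)
    (ρ : ℕ → A) (hρ0 : ρ 0 = 0)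
    (hρ : ∀ k, 1 ≤ k → k ≤ n → ρ k ∈ G.deg 1)
    (hdρ : ∀ k, 1 ≤ k → k ≤ n → G.d (ρ k) = ρ (k - 1) * a) :
    (barDI G + barDE G) (∑ j ∈ Finset.range n, ((-1 : ℚ) ^ j) • Eterm n a ρ j) = 0 := by
  have hJ1 : ∀ x : A, x ∈ G.deg 1 → G.J x = -x := by
    intro x hx
    rw [G.J_apply hx]
    simp
  have haa : a * a = 0 := by
    have h := G.gcomm a a ha ha
    rw [show ((-1 : ℚ) ^ ((1:ℤ) * 1)) = -1 from by norm_num, neg_one_smul] at h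
    have h2 : (2:ℚ) • (a * a) = 0 := by
      rw [two_smul]; nth_rewrite 1 [h]; exact neg_add_cancel _
    calc a * a = (2:ℚ)⁻¹ • ((2:ℚ) • (a * a)) := by rw [smul_smul]; norm_num
    _ = 0 := by rw [h2, smul_zero]
  set t : ℕ → BarComplex A := fun j => ((-1 : ℚ) ^ (j + 1)) • Gterm n a ρ j with ht
  have hterm0 : (barDI G + barDE G) (((-1 : ℚ) ^ 0) • Eterm n a ρ 0) = t 0 := by
    rw [map_smul, LinearMap.add_apply, DI_E G n a hda ρ hdρ 0 (by omega), DE_E0, add_zero, ht]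
    simp
    exact (neg_one_smul ℚ _).symm
  have hterms : ∀ j, j + 1 < n →
      (barDI G + barDE G) (((-1 : ℚ) ^ (j+1)) • Eterm n a ρ (j+1)) = t (j+1) - t j := by
    intro j hj
    rw [map_smul, LinearMap.add_apply, DI_E G n a hda ρ hdρ (j+1) hj,
      DE_Es G n a haa (hJ1 a ha) ρ j hj (hJ1 _ (hρ (n - (j+1)) (by omega) (by omega))), ht]
    simp only [smul_add, smul_neg]
    rw [pow_succ]
    module
  obtain ⟨m, rfl⟩ : ∃ m, n = m + 2 := ⟨n - 2, by omega⟩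
  rw [map_sum, show m + 2 = (m + 1) + 1 from rfl, Finset.sum_range_succ']
  rw [Finset.sum_congr rfl (fun j hj => hterms j (by
    simpa using Nat.add_lt_add_right (Finset.mem_range.mp hj) 1)), hterm0,
    Finset.sum_range_sub, sub_add_cancel]
  have hz : Gterm (m+2) a ρ (m+1) = 0 := by
    rw [Gterm, show m + 2 - (m + 1) - 1 = 0 from by omega, hρ0, zero_mul,
      tprod_zero_slot _ 0 (by simp), map_zero]
  simp only [ht]
  rw [hz, smul_zero]

/-- the element
`L_n := ∑_{j=0}^{n−1} (−1)^j [ρ_{n−j}|a|⋯|a]` (with `j` copies of the letter `a`)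
is homogeneous of degree `0` in the bar complex and is a cocycle for `d_I + d_E`. -/
theorem polylog_cocycle (G : GCDGA A) (n : ℕ) (hn : 2 ≤ n)
    (a : A) (ha : a ∈ G.deg 1) (hda : G.d a = 0)
    (ρ : ℕ → A) (hρ0 : ρ 0 = 0)
    (hρ : ∀ k, 1 ≤ k → k ≤ n → ρ k ∈ G.deg 1)
    (hdρ : ∀ k, 1 ≤ k → k ≤ n → G.d (ρ k) = ρ (k - 1) * a) :
    (∑ j ∈ Finset.range n, ((-1 : ℚ) ^ j) •
        DirectSum.lof ℚ ℕ (fun k => BarPiece A k) (j + 1)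
          (PiTensorProduct.tprod ℚ (Fin.cons (ρ (n - j)) (fun _ : Fin j => a))))
      ∈ barDeg G 0 ∧
    (barDI G + barDE G)
      (∑ j ∈ Finset.range n, ((-1 : ℚ) ^ j) •
        DirectSum.lof ℚ ℕ (fun k => BarPiece A k) (j + 1)
          (PiTensorProduct.tprod ℚ (Fin.cons (ρ (n - j)) (fun _ : Fin j => a)))) = 0 := by
  constructor
  · apply Submodule.sum_mem
    intro j hj
    apply Submodule.smul_mem
    apply Submodule.subset_span
    refine ⟨j + 1, Fin.cons (ρ (n - j)) (fun _ : Fin j => a), fun _ => 1, ?_, ?_, rfl⟩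
    · intro k
      refine Fin.cases ?_ (fun m => ?_) k
      · have := Finset.mem_range.mp hj
        simpa using hρ (n - j) (by omega) (by omega)
      · simpa using ha
    · simp
  · exact polylog_aux G n hn a ha hda ρ hρ0 hρ hdρ
end
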